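/- Let υ_n ∈ F^{n×n} for each n ∈ ℕ with tr(υ_n) = 1, and define A ⊖ B := tr₁₂(α_{m,n}ᵀ(A⊗I_m − I_m⊗B⊗I_m)) where α_{m,n} := Σ_{i,j=1}^m E_{ij}⊗υ_n⊗E_{ji}. Then ⊖ is a uniform Kronecker difference; in particular (A⊕C)⊖B = A⊕(C⊖B) for all A ∈ F^{m×m}, B ∈ F^{n×n}, C ∈ F^{pn×pn}. -/

import Mathlib

open Matrix Kronecker

/-- The Kronecker sum `A ⊕ B = A ⊗ I + I ⊗ B`. -/
def ksum {F : Type*} [Semiring F] {α β : Type*} [Fintype α] [Fintype β]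
    [DecidableEq α] [DecidableEq β]
    (A : Matrix α α F) (B : Matrix β β F) : Matrix (α × β) (α × β) F :=
  A ⊗ₖ (1 : Matrix β β F) + (1 : Matrix α α F) ⊗ₖ B

/-- Partial trace over the first two tensor factors:
`tr12 (A ⊗ B ⊗ C) = tr A * tr B • C`. -/
def tr12 {F : Type*} [AddCommMonoid F] {α β γ : Type*} [Fintype α] [Fintype β]
    (M : Matrix ((α × β) × γ) ((α × β) × γ) F) : Matrix γ γ F :=
  Matrix.of fun c d => ∑ p : α × β, M (p, c) (p, d)

/-- Partial trace over the first tensor factor: `tr1 (A ⊗ B ⊗ C) = tr A • (B ⊗ C)`. -/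
def tr1 {F : Type*} [AddCommMonoid F] {α β γ : Type*} [Fintype α]
    (M : Matrix ((α × β) × γ) ((α × β) × γ) F) : Matrix (β × γ) (β × γ) F :=
  Matrix.of fun p q => ∑ i : α, M ((i, p.1), p.2) ((i, q.1), q.2)

/-- Partial trace over the middle tensor factor: `tr2 (A ⊗ B ⊗ C) = tr B • (A ⊗ C)`. -/
def tr2 {F : Type*} [AddCommMonoid F] {α β γ : Type*} [Fintype β]
    (M : Matrix ((α × β) × γ) ((α × β) × γ) F) : Matrix (α × γ) (α × γ) F :=
  Matrix.of fun p q => ∑ k : β, M ((p.1, k), p.2) ((q.1, k), q.2)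

/-- Partial trace over the third tensor factor: `tr3 (A ⊗ B ⊗ C) = tr C • (A ⊗ B)`. -/
def tr3 {F : Type*} [AddCommMonoid F] {α β γ : Type*} [Fintype γ]
    (M : Matrix ((α × β) × γ) ((α × β) × γ) F) : Matrix (α × β) (α × β) F :=
  Matrix.of fun p q => ∑ c : γ, M (p, c) (q, c)

/-- Partial trace over the second factor of a twofold Kronecker product:
`ptr (B ⊗ C) = tr C • B`. -/
def ptr {F : Type*} [AddCommMonoid F] {α β : Type*} [Fintype β]
    (M : Matrix (α × β) (α × β) F) : Matrix α α F :=
  Matrix.of fun i j => ∑ k : β, M (i, k) (j, k)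

/-- Partial transpose in the third tensor factor: `pT3 (A ⊗ B ⊗ C) = A ⊗ B ⊗ Cᵀ`. -/
def pT3 {F : Type*} {α β γ : Type*}
    (M : Matrix ((α × β) × γ) ((α × β) × γ) F) : Matrix ((α × β) × γ) ((α × β) × γ) F :=
  Matrix.of fun p q => M (p.1, q.2) (q.1, p.2)

/-- Partial transpose in the first two tensor factors:
`pT12 (A ⊗ B ⊗ C) = Aᵀ ⊗ Bᵀ ⊗ C`. -/
def pT12 {F : Type*} {α β γ : Type*}
    (M : Matrix ((α × β) × γ) ((α × β) × γ) F) : Matrix ((α × β) × γ) ((α × β) × γ) F :=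
  Matrix.of fun p q => M (q.1, p.2) (p.1, q.2)

/-- The Kronecker difference generated by the family `υ`:
`A ⊖ B = tr₁₂(α_{m,n}ᵀ (A ⊗ I_m − I_m ⊗ B ⊗ I_m))` with
`α_{m,n} = ∑ i j, E i j ⊗ υ n ⊗ E j i`. -/
def kdiff {F : Type*} [Field F] (υ : ∀ n : ℕ, Matrix (Fin n) (Fin n) F)
    {α : Type*} [Fintype α] [DecidableEq α] {n : ℕ}
    (A : Matrix (α × Fin n) (α × Fin n) F) (B : Matrix (Fin n) (Fin n) F) :
    Matrix α α F :=
  tr12 ((∑ i : α, ∑ j : α,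
      single i j (1 : F) ⊗ₖ υ n ⊗ₖ single j i (1 : F))ᵀ *
    (A ⊗ₖ (1 : Matrix α α F) -
      ((1 : Matrix α α F) ⊗ₖ B) ⊗ₖ (1 : Matrix α α F)))


lemma alpha_eq {F : Type*} [Field F] {α : Type*} [Fintype α] [DecidableEq α] {n : ℕ}
    (u : Matrix (Fin n) (Fin n) F) :
    (∑ i : α, ∑ j : α,
      single i j (1 : F) ⊗ₖ u ⊗ₖ single j i (1 : F))
    = Matrix.of (fun (p q : (α × Fin n) × α) =>
        if p.1.1 = q.2 ∧ q.1.1 = p.2 then u p.1.2 q.1.2 else 0) := by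
  ext ⟨⟨i', l⟩, e⟩ ⟨⟨j', k⟩, f⟩
  simp [Matrix.sum_apply, Matrix.single, ite_and, Finset.sum_ite_eq, Finset.sum_ite_eq',
    eq_comm, and_comm]

lemma kdiff_apply {F : Type*} [Field F] (υ : ∀ n : ℕ, Matrix (Fin n) (Fin n) F)
    {α : Type*} [Fintype α] [DecidableEq α] {n : ℕ}
    (A : Matrix (α × Fin n) (α × Fin n) F) (B : Matrix (Fin n) (Fin n) F) (c d : α) :
    kdiff υ A B c d
    = (∑ l : Fin n, ∑ k : Fin n, υ n l k * A (c, l) (d, k))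
      - (if c = d then ∑ l : Fin n, ∑ k : Fin n, υ n l k * B l k else 0) := by
  simp only [kdiff, alpha_eq, tr12, Matrix.of_apply, mul_apply, transpose_apply, Matrix.sub_apply,
    kroneckerMap_apply, one_apply, Fintype.sum_prod_type]
  simp only [ite_and, mul_ite, ite_mul, one_mul, mul_one, zero_mul, mul_zero, mul_sub,
    sub_zero, zero_sub, Finset.sum_ite_eq, Finset.sum_ite_eq', Finset.sum_sub_distrib]
  simp only [Finset.mem_univ, if_true, Finset.sum_ite_irrel, Finset.sum_const_zero,
    Finset.sum_ite_eq, Finset.sum_ite_eq']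
  congr 1
  · exact Finset.sum_comm
  · split_ifs
    · exact Finset.sum_comm
    · rfl

theorem stmt11 {F : Type*} [Field F] (υ : ∀ n : ℕ, Matrix (Fin n) (Fin n) F)
    (hυ : ∀ n : ℕ, 0 < n → trace (υ n) = 1) :
    (∀ (m n : ℕ), 0 < n → ∀ (A : Matrix (Fin m) (Fin m) F) (B : Matrix (Fin n) (Fin n) F),
      kdiff υ (ksum A B) B = A) ∧
    (∀ (m n : ℕ) (A A' : Matrix (Fin m × Fin n) (Fin m × Fin n) F)
      (B B' : Matrix (Fin n) (Fin n) F),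
      kdiff υ (A + A') (B + B') = kdiff υ A B + kdiff υ A' B') ∧
    (∀ (m n : ℕ) (c : F) (A : Matrix (Fin m × Fin n) (Fin m × Fin n) F)
      (B : Matrix (Fin n) (Fin n) F),
      kdiff υ (c • A) (c • B) = c • kdiff υ A B) ∧
    (∀ (m p n : ℕ), 0 < n → ∀ (A : Matrix (Fin m) (Fin m) F)
      (B : Matrix (Fin n) (Fin n) F) (C : Matrix (Fin p × Fin n) (Fin p × Fin n) F),
      kdiff υ (Matrix.reindex (Equiv.prodAssoc (Fin m) (Fin p) (Fin n)).symm
          (Equiv.prodAssoc (Fin m) (Fin p) (Fin n)).symm (ksum A C)) B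
        = ksum A (kdiff υ C B)) := by
  refine ⟨?_, ?_, ?_, ?_⟩
  · intro m n hn A B
    ext c d
    rw [kdiff_apply]
    have ht : ∑ l : Fin n, υ n l l = 1 := by simpa [trace, diag] using hυ n hn
    simp only [ksum, Matrix.add_apply, kroneckerMap_apply, one_apply, mul_add, mul_ite, mul_one,
      mul_zero, Finset.sum_add_distrib, Finset.sum_ite_eq, Finset.sum_ite_eq',
      Finset.mem_univ, if_true, ite_mul, zero_mul, Finset.sum_ite_irrel, Finset.sum_const_zero]
    rw [← Finset.sum_mul, ht, one_mul]
    split_ifs <;> simp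
  · intro m n A A' B B'
    ext c d
    simp only [Matrix.add_apply, kdiff_apply, mul_add, Finset.sum_add_distrib]
    split_ifs <;> ring
  · intro m n e A B
    ext c d
    simp only [Matrix.smul_apply, kdiff_apply, smul_eq_mul, mul_comm, mul_left_comm, Finset.mul_sum,
      mul_sub, mul_ite, mul_zero]
  · intro m p n hn A B C
    have ht : ∑ l : Fin n, υ n l l = 1 := by simpa [trace, diag] using hυ n hn
    ext ⟨a, s⟩ ⟨b, q⟩
    simp only [kdiff_apply, ksum, Matrix.add_apply, kroneckerMap_apply, one_apply, reindex_apply,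
      submatrix_apply, Equiv.symm_symm, Equiv.prodAssoc_apply, Prod.mk.injEq, ite_and,
      mul_add, mul_ite, mul_one, mul_zero, Finset.sum_add_distrib, Finset.sum_ite_irrel,
      Finset.sum_const_zero, Finset.sum_ite_eq, Finset.sum_ite_eq', Finset.mem_univ, if_true,
      one_mul, zero_mul, ite_mul]
    rw [← Finset.sum_mul, ht, one_mul]
    split_ifs <;> ring_nf
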